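/- Let s, t ≥ 2 and z be natural numbers with t·(s−1) < z ≤ t·s, and set θ' = t·(2s−1). Define P_CA = {i + t·j : 0 ≤ i ≤ t−1, 0 ≤ j ≤ s−1}, P_CB = {t·q + θ'·l : 0 ≤ q ≤ s−1, 0 ≤ l ≤ t−1}, P_SA = {t·s + w : 0 ≤ w ≤ t·(s−1)−1} ∪ {t·s + θ' + u : 0 ≤ u ≤ z−1−t·(s−1)}, and P_SB = {t·s + θ'·(t−1) + r : 0 ≤ r ≤ z−1}. Then the sumset (P_CA ∪ P_SA) + (P_CB ∪ P_SB) has cardinality 2·t·s + θ'·(t−1) + 3z − 1. -/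
import Mathlib

open Pointwise

private lemma iio_union_ico (a b : ℕ) (h : a ≤ b) :
    Set.Iio a ∪ Set.Ico a b = Set.Iio b := by
  ext n; simp only [Set.mem_union, Set.mem_Iio, Set.mem_Ico]; omega

private lemma setOf_lt_add (a b : ℕ) :
    {n : ℕ | ∃ w, w < b ∧ n = a + w} = Set.Ico a (a + b) := by
  ext n; simp only [Set.mem_setOf_eq, Set.mem_Ico]
  constructor
  · rintro ⟨w, hw, rfl⟩; omega
  · intro h; exact ⟨n - a, by omega, by omega⟩

private lemma setOf_le_add (a b : ℕ) :
    {n : ℕ | ∃ u, u ≤ b ∧ n = a + u} = Set.Icc a (a + b) := by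
  ext n; simp only [Set.mem_setOf_eq, Set.mem_Icc]
  constructor
  · rintro ⟨u, hu, rfl⟩; omega
  · intro h; exact ⟨n - a, by omega, by omega⟩

private lemma ico_succ' (a b : ℕ) : Set.Ico a (a + (b + 1)) = Set.Icc a (a + b) := by
  ext n; simp only [Set.mem_Ico, Set.mem_Icc]; omega

private lemma grid_eq_iio (c d : ℕ) (hc : 0 < c) :
    {n : ℕ | ∃ i j, i < c ∧ j < d ∧ n = i + c * j} = Set.Iio (c * d) := by
  ext n
  simp only [Set.mem_setOf_eq, Set.mem_Iio]
  constructor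
  · rintro ⟨i, j, hi, hj, rfl⟩
    have h1 : c * (j + 1) ≤ c * d := Nat.mul_le_mul le_rfl hj
    have h2 : c * (j + 1) = c * j + c := by ring
    omega
  · intro h
    refine ⟨n % c, n / c, Nat.mod_lt _ hc, ?_, (Nat.mod_add_div n c).symm⟩
    by_contra hd
    push_neg at hd
    have h1 : c * d ≤ c * (n / c) := Nat.mul_le_mul le_rfl hd
    have h2 := Nat.mod_add_div n c
    omega

private lemma sumset_eq (θ K K2 z0 M : ℕ) (Q : Set ℕ)
    (hθpos : 0 < θ) (hKθ : K ≤ θ) (hKK2 : K + K2 = θ + z0)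
    (hQ1 : ∀ n ∈ Q, n + K ≤ θ + M)
    (hQdiv : ∀ n, n < M + θ → ∃ m, m < θ ∧ ∃ y ∈ Q, n = m + y)
    (hQ3 : ∃ m ∈ Q, m + K = θ + M) :
    (Set.Iio θ ∪ Set.Icc (K + θ) (K + θ + z0)) + (Q ∪ Set.Icc (K + M) (K + M + K2))
      = Set.Iio (M + 2 * θ + z0 + 1) ∪ Set.Icc (M + θ + 2 * K) (M + θ + 2 * K + K2 + z0) := by
  ext n
  simp only [Set.mem_add, Set.mem_union, Set.mem_Iio, Set.mem_Icc]
  constructor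
  · rintro ⟨x, hx, y, hy, rfl⟩
    rcases hx with hx | hx
    · rcases hy with hy | hy
      · have := hQ1 y hy; left; omega
      · left; omega
    · rcases hy with hy | hy
      · have := hQ1 y hy; left; omega
      · right; omega
  · intro h
    rcases h with h | h
    · by_cases h1 : n < M + θ
      · obtain ⟨m, hm, y, hy, rfl⟩ := hQdiv n h1
        exact ⟨m, Or.inl hm, y, Or.inl hy, rfl⟩
      · by_cases h2 : n = M + 2 * θ + z0
        · obtain ⟨m, hm, hmK⟩ := hQ3
          exact ⟨K + θ + z0, Or.inr ⟨by omega, by omega⟩, m, Or.inl hm, by omega⟩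
        · refine ⟨n - (K + M) - min (n - (K + M)) K2, Or.inl (by omega),
            K + M + min (n - (K + M)) K2, Or.inr ⟨by omega, by omega⟩, by omega⟩
    · refine ⟨K + θ + (n - (M + θ + 2 * K) - min (n - (M + θ + 2 * K)) K2),
        Or.inr ⟨by omega, by omega⟩,
        K + M + min (n - (M + θ + 2 * K)) K2, Or.inr ⟨by omega, by omega⟩, by omega⟩

private lemma count_iio_icc (A B C : ℕ) (hAB : A ≤ B) :
    (Set.Iio A ∪ Set.Icc B C).ncard = A + (C + 1 - B) := by
  have hdisj : Disjoint (Finset.Iio A) (Finset.Icc B C) := by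
    rw [Finset.disjoint_left]
    intro a ha hb
    simp only [Finset.mem_Iio] at ha
    simp only [Finset.mem_Icc] at hb
    omega
  rw [← Finset.coe_Iio, ← Finset.coe_Icc, ← Finset.coe_union, Set.ncard_coe_finset,
    Finset.card_union_of_disjoint hdisj, Nat.card_Iio, Nat.card_Icc]

private lemma main_count (σ τ z0 : ℕ) (hz0 : z0 ≤ τ) :
    (({n : ℕ | ∃ i j, i < τ + 1 ∧ j < σ + 1 ∧ n = i + (τ + 1) * j} ∪
      ({n : ℕ | ∃ w, w < (τ + 1) * σ ∧ n = (τ + 1) * (σ + 1) + w} ∪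
       {n : ℕ | ∃ u, u ≤ z0 ∧ n = (τ + 1) * (σ + 1) + (τ + 1) * (2 * σ + 1) + u})) +
     ({n : ℕ | ∃ q l, q < σ + 1 ∧ l < τ + 1 ∧ n = (τ + 1) * q + ((τ + 1) * (2 * σ + 1)) * l} ∪
      {n : ℕ | ∃ r, r < (τ + 1) * σ + z0 + 1 ∧
        n = (τ + 1) * (σ + 1) + ((τ + 1) * (2 * σ + 1)) * τ + r})).ncard
    = 2 * ((τ + 1) * (σ + 1)) + ((τ + 1) * (2 * σ + 1)) * τ + 3 * ((τ + 1) * σ + z0 + 1) - 1 := by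
  have hθpos : 0 < (τ + 1) * (2 * σ + 1) := Nat.mul_pos (by omega) (by omega)
  have hKθ : (τ + 1) * (σ + 1) ≤ (τ + 1) * (2 * σ + 1) := Nat.mul_le_mul le_rfl (by omega)
  have hKT : (τ + 1) * (σ + 1) + (τ + 1) * σ = (τ + 1) * (2 * σ + 1) := by ring
  have hA : {n : ℕ | ∃ i j, i < τ + 1 ∧ j < σ + 1 ∧ n = i + (τ + 1) * j} ∪
      ({n : ℕ | ∃ w, w < (τ + 1) * σ ∧ n = (τ + 1) * (σ + 1) + w} ∪
       {n : ℕ | ∃ u, u ≤ z0 ∧ n = (τ + 1) * (σ + 1) + (τ + 1) * (2 * σ + 1) + u})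
      = Set.Iio ((τ + 1) * (2 * σ + 1)) ∪
        Set.Icc ((τ + 1) * (σ + 1) + (τ + 1) * (2 * σ + 1))
          ((τ + 1) * (σ + 1) + (τ + 1) * (2 * σ + 1) + z0) := by
    rw [grid_eq_iio (τ + 1) (σ + 1) (by omega), setOf_lt_add, setOf_le_add, ← Set.union_assoc,
      iio_union_ico _ _ (Nat.le_add_right _ _), hKT]
  have hB : {n : ℕ | ∃ r, r < (τ + 1) * σ + z0 + 1 ∧
        n = (τ + 1) * (σ + 1) + ((τ + 1) * (2 * σ + 1)) * τ + r}
      = Set.Icc ((τ + 1) * (σ + 1) + ((τ + 1) * (2 * σ + 1)) * τ)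
          ((τ + 1) * (σ + 1) + ((τ + 1) * (2 * σ + 1)) * τ + ((τ + 1) * σ + z0)) := by
    rw [setOf_lt_add, ico_succ']
  rw [hA, hB, sumset_eq ((τ + 1) * (2 * σ + 1)) ((τ + 1) * (σ + 1)) ((τ + 1) * σ + z0) z0
      (((τ + 1) * (2 * σ + 1)) * τ) _ hθpos hKθ (by ring) ?hq1 ?hqdiv ?hq3,
    count_iio_icc _ _ _ ?hab]
  case hq1 =>
    rintro n ⟨q, l, hq, hl, rfl⟩
    have h1 : (τ + 1) * q ≤ (τ + 1) * σ := Nat.mul_le_mul le_rfl (by omega)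
    have h2 : ((τ + 1) * (2 * σ + 1)) * l ≤ ((τ + 1) * (2 * σ + 1)) * τ :=
      Nat.mul_le_mul le_rfl (by omega)
    linarith [hKT]
  case hqdiv =>
    intro n hn
    have hn' : n < ((τ + 1) * (2 * σ + 1)) * (τ + 1) := by
      have h : ((τ + 1) * (2 * σ + 1)) * (τ + 1)
          = ((τ + 1) * (2 * σ + 1)) * τ + (τ + 1) * (2 * σ + 1) := by ring
      linarith
    refine ⟨n % ((τ + 1) * (2 * σ + 1)), Nat.mod_lt _ hθpos,
      (τ + 1) * 0 + ((τ + 1) * (2 * σ + 1)) * (n / ((τ + 1) * (2 * σ + 1))),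
      ⟨0, n / ((τ + 1) * (2 * σ + 1)), by omega, Nat.div_lt_of_lt_mul hn', rfl⟩, ?_⟩
    rw [Nat.mul_zero, Nat.zero_add]
    exact (Nat.mod_add_div n _).symm
  case hq3 =>
    exact ⟨(τ + 1) * σ + ((τ + 1) * (2 * σ + 1)) * τ, ⟨σ, τ, by omega, by omega, rfl⟩,
      by linarith [hKT]⟩
  case hab =>
    have hK2K : (τ + 1) * σ + z0 < (τ + 1) * (σ + 1) := by
      have h : (τ + 1) * (σ + 1) = (τ + 1) * σ + τ + 1 := by ring
      omega
    linarith
  have hsub : ∀ a b c : ℕ, a + b + c + ((τ + 1) * σ + z0) + z0 + 1 - (a + b + c)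
      = (τ + 1) * σ + 2 * z0 + 1 := by intro a b c; omega
  rw [hsub]
  omega

theorem polydot_workers_psi2 (s t z : ℕ) (hs : 2 ≤ s) (ht : 2 ≤ t)
    (hz1 : t * (s - 1) < z) (hz2 : z ≤ t * s) :
    (({n : ℕ | ∃ i j, i < t ∧ j < s ∧ n = i + t * j} ∪
      ({n : ℕ | ∃ w, w < t * (s - 1) ∧ n = t * s + w} ∪
       {n : ℕ | ∃ u, u ≤ z - 1 - t * (s - 1) ∧
          n = t * s + t * (2 * s - 1) + u})) +
     ({n : ℕ | ∃ q l, q < s ∧ l < t ∧ n = t * q + (t * (2 * s - 1)) * l} ∪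
      {n : ℕ | ∃ r, r < z ∧ n = t * s + (t * (2 * s - 1)) * (t - 1) + r})).ncard
      = 2 * (t * s) + (t * (2 * s - 1)) * (t - 1) + 3 * z - 1 := by
  obtain ⟨σ, rfl⟩ : ∃ σ, s = σ + 1 := ⟨s - 1, by omega⟩
  obtain ⟨τ, rfl⟩ : ∃ τ, t = τ + 1 := ⟨t - 1, by omega⟩
  have e1 : 2 * (σ + 1) - 1 = 2 * σ + 1 := by omega
  simp only [Nat.add_sub_cancel, e1] at hz1 hz2 ⊢
  obtain ⟨z0, rfl⟩ := Nat.exists_eq_add_of_lt hz1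
  have hz0 : z0 ≤ τ := by
    have e : (τ + 1) * (σ + 1) = (τ + 1) * σ + τ + 1 := by ring
    omega
  have e2 : (τ + 1) * σ + z0 + 1 - 1 - (τ + 1) * σ = z0 := by omega
  simp only [e2]
  exact main_count σ τ z0 hz0
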